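/- Let H be a real Hilbert space, f : H → ℝ strongly quasiconvex with value γ > 0 with minimizer x*, let c > 0 and (c_k) a sequence of reals with c_k ≥ c for all k, and let (x^k) be a sequence in H with x^{k+1} ∈ Prox_{c_k f}(x^k) for all k ∈ ℕ. Then for every k ∈ ℕ: ‖x^{k+1} − x*‖² ≤ ‖x^k − x*‖² − ‖x^k − x^{k+1}‖². -/

import Mathlib

/-- Fejér-type recursive inequality for the proximal point
algorithm applied to a strongly quasiconvex function. -/
theorem ppa_fejer_inequality
    {H : Type*} [NormedAddCommGroup H] [InnerProductSpace ℝ H] [CompleteSpace H]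
    (f : H → ℝ) (γ : ℝ) (hγ : 0 < γ)
    (hf : ∀ x y : H, ∀ t ∈ Set.Icc (0 : ℝ) 1,
      f ((1 - t) • x + t • y) ≤ max (f x) (f y) - t * (1 - t) * (γ / 2) * ‖x - y‖ ^ 2)
    (xs : H) (hxs : ∀ y : H, f xs ≤ f y)
    (c : ℝ) (hc : 0 < c) (ck : ℕ → ℝ) (hck : ∀ k, c ≤ ck k)
    (x : ℕ → H)
    (hx : ∀ k : ℕ, ∀ y : H,
      f (x (k + 1)) + (1 / (2 * ck k)) * ‖x (k + 1) - x k‖ ^ 2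
        ≤ f y + (1 / (2 * ck k)) * ‖y - x k‖ ^ 2) :
    ∀ k : ℕ, ‖x (k + 1) - xs‖ ^ 2 ≤ ‖x k - xs‖ ^ 2 - ‖x k - x (k + 1)‖ ^ 2 := by
  intro k
  set K := ck k with hK
  have hKpos : 0 < K := lt_of_lt_of_le hc (hck k)
  have hKγ : 0 < K * γ := mul_pos hKpos hγ
  set t : ℝ := K * γ / (1 + K * γ) with ht
  have hden : 0 < 1 + K * γ := by linarith
  have ht0 : 0 < t := div_pos hKγ hden
  have ht1 : t < 1 := (div_lt_one hden).mpr (by linarith)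
  have htI : t ∈ Set.Icc (0 : ℝ) 1 := ⟨le_of_lt ht0, le_of_lt ht1⟩
  -- key identity : t * (1 - t) * (K * γ) = t ^ 2
  have hkey : t * (1 - t) * (K * γ) = t ^ 2 := by
    field_simp [ht]
    have e : t * (1 + K * γ) = K * γ := by rw [ht, div_mul_cancel₀ _ hden.ne']
    linear_combination (-1:ℝ) * e
  set a : H := x (k + 1) - x k with ha
  set b : H := xs - x (k + 1) with hb
  have hpt : (1 - t) • x (k + 1) + t • xs - x k = a + t • b := by
    rw [ha, hb]
    module
  have h1 := hx k ((1 - t) • x (k + 1) + t • xs)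
  have h2 := hf (x (k + 1)) xs t htI
  have h3 : max (f (x (k + 1))) (f xs) = f (x (k + 1)) :=
    max_eq_left (hxs _)
  rw [h3] at h2
  rw [hpt] at h1
  have hnb : ‖x (k + 1) - xs‖ = ‖b‖ := by rw [hb, ← norm_neg]; congr 1; abel
  rw [hnb] at h2
  -- expand the square
  have hexp : ‖a + t • b‖ ^ 2 = ‖a‖ ^ 2 + 2 * t * (inner ℝ a b : ℝ) + t ^ 2 * ‖b‖ ^ 2 := by
    rw [@norm_add_sq_real, real_inner_smul_right, norm_smul, mul_pow]
    simp [Real.norm_eq_abs, sq_abs]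
    ring
  rw [hexp] at h1
  set I : ℝ := (inner ℝ a b : ℝ) with hI
  rw [← ha, ← hK] at h1
  have hchain : (0:ℝ) ≤ - (t * (1 - t) * (γ / 2) * ‖b‖ ^ 2)
      + (1 / (2 * K)) * (‖a‖ ^ 2 + 2 * t * I + t ^ 2 * ‖b‖ ^ 2)
      - (1 / (2 * K)) * ‖a‖ ^ 2 := by linarith
  have hdiv : (1 / (2 * K)) * (‖a‖ ^ 2 + 2 * t * I + t ^ 2 * ‖b‖ ^ 2)
      - (1 / (2 * K)) * ‖a‖ ^ 2 = (2 * t * I + t ^ 2 * ‖b‖ ^ 2) / (2 * K) := by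
    ring
  have h5 : t * (1 - t) * (γ / 2) * ‖b‖ ^ 2 * (2 * K) ≤ 2 * t * I + t ^ 2 * ‖b‖ ^ 2 := by
    rw [← le_div_iff₀ (by positivity : (0:ℝ) < 2 * K)]
    linarith [hdiv]
  have h6 : t * (1 - t) * (γ / 2) * ‖b‖ ^ 2 * (2 * K) = t ^ 2 * ‖b‖ ^ 2 := by
    rw [← hkey]; ring
  rw [h6] at h5
  have hinner : 0 ≤ I := by nlinarith [ht0]
  -- conclude
  have hid : ‖x k - xs‖ ^ 2 = ‖a‖ ^ 2 + 2 * I + ‖b‖ ^ 2 := by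
    have hxk : x k - xs = -(a + b) := by rw [ha, hb]; abel
    rw [hxk, norm_neg, @norm_add_sq_real, hI]
  have hid2 : ‖x (k + 1) - xs‖ ^ 2 = ‖b‖ ^ 2 := by rw [hnb]
  have hid3 : ‖x k - x (k + 1)‖ ^ 2 = ‖a‖ ^ 2 := by
    rw [ha, ← norm_neg]; congr 2; abel
  rw [hid, hid2, hid3]
  linarith
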